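/- For every integer s ≥ 2 and every n ≥ 0, one has the identity of real numbers |T_n| / (Σ_{k=0}^{n} |T_k|) = √((s−1)/s) · (1 − (r_−/r_+)^{n+1}) / (1 + (r_−/r_+)^{n+1} − 2·r_+^{−(n+1)}), where r_± = s·(1 ± √(1 − 1/s)). In particular, this ratio converges to √((s−1)/s) as n → ∞. -/

import Mathlib

open Finset

noncomputable def Tset (s n : ℕ) : Finset (Fin n → ℤ) :=
  letI := Classical.decPred
    (fun t : Fin n → ℤ => (∀ i, t i ≠ 0) ∧
      ∀ (i : Fin n) (h : (i : ℕ) + 1 < n), ¬(0 < t i ∧ t ⟨(i : ℕ) + 1, h⟩ = -t i))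
  (Fintype.piFinset fun _ : Fin n => Finset.Icc (-(s : ℤ)) (s : ℤ)).filter
    (fun t => (∀ i, t i ≠ 0) ∧
      ∀ (i : Fin n) (h : (i : ℕ) + 1 < n), ¬(0 < t i ∧ t ⟨(i : ℕ) + 1, h⟩ = -t i))

lemma mem_Tset {s n : ℕ} {t : Fin n → ℤ} :
    t ∈ Tset s n ↔ (∀ i, t i ∈ Finset.Icc (-(s:ℤ)) (s:ℤ)) ∧ (∀ i, t i ≠ 0) ∧
      ∀ (i : Fin n) (h : (i : ℕ) + 1 < n), ¬(0 < t i ∧ t ⟨(i : ℕ) + 1, h⟩ = -t i) := by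
  simp [Tset, Fintype.mem_piFinset, and_assoc]

lemma snoc_apply_lt {n : ℕ} (u : Fin n → ℤ) (x : ℤ) (i : Fin (n+1)) (h : (i : ℕ) < n) :
    (Fin.snoc u x : Fin (n+1) → ℤ) i = u ⟨i, h⟩ := by
  simp only [Fin.snoc, h, dite_true, cast_eq]
  rfl

lemma snoc_mem_Tset {s n : ℕ} {u : Fin n → ℤ} {x : ℤ}
    (hu : u ∈ Tset s n) (hx1 : x ∈ Finset.Icc (-(s:ℤ)) (s:ℤ)) (hx0 : x ≠ 0)
    (hlast : ∀ i : Fin n, (i : ℕ) + 1 = n → ¬(0 < u i ∧ x = -u i)) :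
    Fin.snoc u x ∈ Tset s (n+1) := by
  rw [mem_Tset] at hu ⊢
  obtain ⟨h1, h2, h3⟩ := hu
  refine ⟨?_, ?_, ?_⟩
  · intro i
    rcases lt_or_ge (i : ℕ) n with h | h
    · rw [snoc_apply_lt u x i h]; exact h1 _
    · have : i = Fin.last n := Fin.ext (le_antisymm (Nat.lt_succ_iff.mp i.isLt) h)
      rw [this, Fin.snoc_last]; exact hx1
  · intro i
    rcases lt_or_ge (i : ℕ) n with h | h
    · rw [snoc_apply_lt u x i h]; exact h2 _
    · have : i = Fin.last n := Fin.ext (le_antisymm (Nat.lt_succ_iff.mp i.isLt) h)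
      rw [this, Fin.snoc_last]; exact hx0
  · intro i h
    have hi : (i : ℕ) < n := by omega
    rw [snoc_apply_lt u x i hi]
    rcases lt_or_ge ((i : ℕ) + 1) n with h' | h'
    · rw [snoc_apply_lt u x ⟨(i:ℕ)+1, h⟩ h']
      exact h3 ⟨i, hi⟩ h'
    · have hn : (i : ℕ) + 1 = n := by omega
      have : (⟨(i:ℕ)+1, h⟩ : Fin (n+1)) = Fin.last n := Fin.ext (by simpa using hn)
      rw [this, Fin.snoc_last]
      intro ⟨hp, he⟩
      exact hlast ⟨i, hi⟩ hn ⟨hp, he⟩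

lemma init_mem_Tset {s n : ℕ} {t : Fin (n+1) → ℤ} (ht : t ∈ Tset s (n+1)) :
    Fin.init t ∈ Tset s n := by
  rw [mem_Tset] at ht ⊢
  obtain ⟨h1, h2, h3⟩ := ht
  refine ⟨fun i => h1 _, fun i => h2 _, ?_⟩
  intro i h
  have h' : (i : ℕ) + 1 < n + 1 := by omega
  have := h3 (Fin.castSucc i) (by simp only [Fin.coe_castSucc]; exact h')
  simp only [Fin.init]
  convert this using 3
  rfl

lemma Tcard_zero (s : ℕ) : (Tset s 0).card = 1 := by
  rw [Finset.card_eq_one]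
  refine ⟨fun i => i.elim0, ?_⟩
  ext t
  simp only [Finset.mem_singleton, mem_Tset]
  constructor
  · intro _; funext i; exact i.elim0
  · rintro rfl; exact ⟨fun i => i.elim0, fun i => i.elim0, fun i => i.elim0⟩

lemma Tcard_one (s : ℕ) : (Tset s 1).card = 2 * s := by
  have h1 : (Tset s 1).card = (((Finset.Icc (-(s:ℤ)) s)).erase 0).card := by
    refine Finset.card_nbij' (fun t => t 0) (fun x _ => x) ?_ ?_ ?_ ?_
    · intro t ht
      simp only [Finset.mem_coe] at *
      rw [mem_Tset] at ht
      exact Finset.mem_erase.mpr ⟨ht.2.1 0, ht.1 0⟩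
    · intro x hx
      simp only [Finset.mem_coe] at *
      rw [Finset.mem_erase] at hx
      rw [mem_Tset]
      exact ⟨fun _ => hx.2, fun _ => hx.1, fun i h => absurd h (by omega)⟩
    · intro t _; funext i; have hi : i = 0 := Subsingleton.elim i 0; rw [hi]
    · intro x _; rfl
  rw [h1, Finset.card_erase_of_mem (by simp), Int.card_Icc]
  omega

lemma posCount (s n : ℕ) :
    ((Tset s (n+1)).filter (fun t => 0 < t (Fin.last n))).card = s * (Tset s n).card := by
  classical
  have h1 : ((Tset s (n+1)).filter (fun t => 0 < t (Fin.last n))).card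
      = (Tset s n ×ˢ Finset.Icc (1:ℤ) s).card := by
    refine Finset.card_nbij' (fun t => (Fin.init t, t (Fin.last n)))
      (fun p => Fin.snoc p.1 p.2) ?_ ?_ ?_ ?_
    · intro t ht
      simp only [Finset.mem_coe] at *
      rw [Finset.mem_filter] at ht
      refine Finset.mem_product.mpr ⟨init_mem_Tset ht.1, ?_⟩
      have := (mem_Tset.mp ht.1).1 (Fin.last n)
      rw [Finset.mem_Icc] at this ⊢
      exact ⟨ht.2, this.2⟩
    · intro p hp
      simp only [Finset.mem_coe] at *
      rw [Finset.mem_product, Finset.mem_Icc] at hp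
      refine Finset.mem_filter.mpr ⟨?_, ?_⟩
      · refine snoc_mem_Tset hp.1 ?_ (by omega) ?_
        · rw [Finset.mem_Icc]
          constructor
          · have : (0:ℤ) ≤ s := Int.ofNat_nonneg s
            omega
          · exact hp.2.2
        · intro i _ ⟨hpos, heq⟩
          have : (1:ℤ) ≤ p.2 := hp.2.1
          omega
      · show (0:ℤ) < (Fin.snoc p.1 p.2 : Fin (n+1) → ℤ) (Fin.last n)
        rw [Fin.snoc_last]; exact lt_of_lt_of_le one_pos hp.2.1
    · intro t _; exact Fin.snoc_init_self t
    · intro p _; simp [Fin.init_snoc, Fin.snoc_last]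
  have hI : (Finset.Icc (1:ℤ) s).card = s := by simp [Int.card_Icc]
  rw [h1, Finset.card_product, hI, mul_comm]

lemma stepCount (s n : ℕ) (hs : 1 ≤ s) :
    (Tset s (n+2)).card + ((Tset s (n+1)).filter (fun t => 0 < t (Fin.last n))).card
      = 2 * s * (Tset s (n+1)).card := by
  classical
  set Sstar : Finset ℤ := (Finset.Icc (-(s:ℤ)) s).erase 0 with hSstar
  have hScard : Sstar.card = 2 * s := by
    rw [hSstar, Finset.card_erase_of_mem (by simp), Int.card_Icc]; omega
  set allowed : (Fin (n+1) → ℤ) → Finset ℤ :=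
    fun t => Sstar.filter (fun x => ¬(0 < t (Fin.last n) ∧ x = - t (Fin.last n)))
    with hallowed
  have hsig : (Tset s (n+2)).card = ((Tset s (n+1)).sigma allowed).card := by
    refine Finset.card_nbij' (fun t => ⟨Fin.init t, t (Fin.last (n+1))⟩)
      (fun p => Fin.snoc p.1 p.2) ?_ ?_ ?_ ?_
    · intro t ht
      simp only [Finset.mem_coe] at *
      rw [Finset.mem_sigma]
      obtain ⟨h1, h2, h3⟩ := mem_Tset.mp ht
      refine ⟨init_mem_Tset ht, ?_⟩
      rw [hallowed, Finset.mem_filter, hSstar, Finset.mem_erase]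
      refine ⟨⟨h2 _, h1 _⟩, ?_⟩
      have key := h3 (Fin.castSucc (Fin.last n)) (by simp)
      intro ⟨hp, he⟩
      refine key ⟨hp, ?_⟩
      have : (⟨(Fin.castSucc (Fin.last n) : ℕ) + 1, by simp⟩ : Fin (n+2)) = Fin.last (n+1) := by
        apply Fin.ext; simp
      rw [this]
      exact he
    · rintro ⟨u, x⟩ hp
      simp only [Finset.mem_coe] at *
      rw [Finset.mem_sigma] at hp
      obtain ⟨hu, hx⟩ := hp
      rw [hallowed, Finset.mem_filter, hSstar, Finset.mem_erase] at hx
      refine snoc_mem_Tset hu hx.1.2 hx.1.1 ?_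
      intro i hi hcon
      have : i = Fin.last n := Fin.ext (by simpa using hi)
      rw [this] at hcon
      exact hx.2 hcon
    · intro t _; exact Fin.snoc_init_self t
    · rintro ⟨u, x⟩ _
      simp [Fin.init_snoc, Fin.snoc_last]
  rw [hsig, Finset.card_sigma]
  have hcardallowed : ∀ t ∈ Tset s (n+1),
      (allowed t).card = if 0 < t (Fin.last n) then 2*s - 1 else 2*s := by
    intro t ht
    obtain ⟨h1, h2, _⟩ := mem_Tset.mp ht
    by_cases hpos : 0 < t (Fin.last n)
    · rw [if_pos hpos]
      have : allowed t = Sstar.erase (- t (Fin.last n)) := by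
        rw [hallowed, ← Finset.filter_ne']
        apply Finset.filter_congr
        intro x _
        simp [hpos]
      rw [this, Finset.card_erase_of_mem, hScard]
      rw [hSstar, Finset.mem_erase]
      constructor
      · simpa using h2 (Fin.last n)
      · have := h1 (Fin.last n)
        rw [Finset.mem_Icc] at this ⊢
        omega
    · rw [if_neg hpos]
      have : allowed t = Sstar := by
        rw [hallowed]
        apply Finset.filter_true_of_mem
        intro x _
        intro ⟨hp, _⟩
        exact hpos hp
      rw [this, hScard]
  rw [Finset.sum_congr rfl hcardallowed, Finset.card_filter]
  rw [← Finset.sum_add_distrib]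
  have : ∀ t ∈ Tset s (n+1),
      ((if 0 < t (Fin.last n) then 2*s-1 else 2*s) + (if 0 < t (Fin.last n) then 1 else 0)) = 2*s := by
    intro t _
    by_cases hpos : 0 < t (Fin.last n) <;> simp [hpos] <;> omega
  rw [Finset.sum_congr rfl this, Finset.sum_const, smul_eq_mul, mul_comm]

section algebra
variable {s d : ℝ} (hs : 2 ≤ s) (hdpos : 0 < d) (hd1 : d < 1) (hd : s * d ^ 2 = s - 1)

include hs hdpos hd1 hd

lemma closed_form (a : ℕ → ℕ) (ha0 : a 0 = 1) (ha1 : a 1 = 2 * s)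
    (harec : ∀ n, (a (n+2) : ℝ) + s * a n = 2 * s * a (n+1)) :
    ∀ n, (a n : ℝ) = ((s*(1+d))^(n+1) - (s*(1-d))^(n+1)) / (2*s*d) := by
  have hs0 : (0:ℝ) < s := by linarith
  have hne : 2*s*d ≠ 0 := by positivity
  have key : ∀ n, (a n : ℝ) = ((s*(1+d))^(n+1) - (s*(1-d))^(n+1)) / (2*s*d) ∧
      (a (n+1) : ℝ) = ((s*(1+d))^(n+2) - (s*(1-d))^(n+2)) / (2*s*d) := by
    intro n
    induction n with
    | zero =>
      constructor
      · rw [ha0]; field_simp; ring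
      · rw [ha1]; field_simp; ring
    | succ m ih =>
      refine ⟨ih.2, ?_⟩
      have hrec := harec m
      have : (a (m+2) : ℝ) = 2*s*(a (m+1):ℝ) - s*(a m : ℝ) := by linarith
      rw [this, ih.1, ih.2]
      rw [← mul_div_assoc, ← mul_div_assoc, div_sub_div_same, div_eq_div_iff hne hne]
      linear_combination (2*s^2*d*((s*(1-d))^(m+1) - (s*(1+d))^(m+1))) * hd
  exact fun n => (key n).1

lemma sum_form (a : ℕ → ℕ) (ha0 : a 0 = 1) (ha1 : a 1 = 2 * s)
    (harec : ∀ n, (a (n+2) : ℝ) + s * a n = 2 * s * a (n+1)) :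
    ∀ n, (∑ k ∈ Finset.range (n+1), (a k : ℝ))
      = ((s*(1+d))^(n+1) + (s*(1-d))^(n+1) - 2) / (2*(s-1)) := by
  have hs0 : (0:ℝ) < s := by linarith
  have hne : 2*s*d ≠ 0 := by positivity
  have hs1 : s - 1 ≠ 0 := by linarith
  have hcf := closed_form hs hdpos hd1 hd a ha0 ha1 harec
  intro n
  induction n with
  | zero =>
    simp [ha0]
    rw [eq_comm, div_eq_iff (by intro h; apply hs1; linarith)]
    ring
  | succ m ih =>
    rw [Finset.sum_range_succ, ih, hcf (m+1)]
    rw [div_add_div _ _ (by intro h; apply hs1; linarith) hne, div_eq_div_iff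
      (by intro h; apply hs1; nlinarith) (by intro h; apply hs1; nlinarith)]
    linear_combination (4*s*((s*(1+d))^(m+1) - (s*(1-d))^(m+1))
      + 4*s^2*((s*(1-d))^(m+1) - (s*(1+d))^(m+1))) * hd
end algebra

section ratio
variable {s d : ℝ} (hs : 2 ≤ s) (hdpos : 0 < d) (hd1 : d < 1) (hd : s * d ^ 2 = s - 1)
include hs hdpos hd1 hd

lemma ratio_eq (k : ℕ) (hk : 1 ≤ k) :
    (((s*(1+d))^k - (s*(1-d))^k) / (2*s*d)) /
      (((s*(1+d))^k + (s*(1-d))^k - 2) / (2*(s-1)))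
    = d * ((1 - ((s*(1-d))/(s*(1+d)))^k)
        / (1 + ((s*(1-d))/(s*(1+d)))^k - 2*(((s*(1+d))^k)⁻¹))) := by
  have hs0 : (0:ℝ) < s := by linarith
  have hP0 : (0:ℝ) < s*(1+d) := by nlinarith
  have hM0 : (0:ℝ) < s*(1-d) := by nlinarith
  have hP2 : (2:ℝ) ≤ s*(1+d) := by nlinarith
  have hPk2 : (2:ℝ) ≤ (s*(1+d))^k := by
    calc (2:ℝ) = 2^1 := (pow_one 2).symm
    _ ≤ 2^k := pow_le_pow_right₀ one_le_two hk
    _ ≤ (s*(1+d))^k := pow_le_pow_left₀ (by norm_num) hP2 k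
  have hMk0 : (0:ℝ) < (s*(1-d))^k := pow_pos hM0 k
  have hPk0 : (0:ℝ) < (s*(1+d))^k := pow_pos hP0 k
  have hB0 : (0:ℝ) < (s*(1+d))^k + (s*(1-d))^k - 2 := by linarith
  -- RHS simplification
  rw [div_pow]
  rw [show (1:ℝ) - (s*(1-d))^k/(s*(1+d))^k
      = ((s*(1+d))^k - (s*(1-d))^k) / (s*(1+d))^k by field_simp]
  rw [show (1:ℝ) + (s*(1-d))^k/(s*(1+d))^k - 2*(((s*(1+d))^k)⁻¹)
      = ((s*(1+d))^k + (s*(1-d))^k - 2) / (s*(1+d))^k by field_simp]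
  rw [show ((s*(1+d))^k - (s*(1-d))^k) / (s*(1+d))^k /
        (((s*(1+d))^k + (s*(1-d))^k - 2) / (s*(1+d))^k)
      = ((s*(1+d))^k - (s*(1-d))^k) / ((s*(1+d))^k + (s*(1-d))^k - 2) from by
    rw [div_div_div_comm, div_self hPk0.ne', div_one]]
  -- LHS simplification
  rw [div_div_div_comm]
  rw [show (2*s*d) / (2*(s-1)) = 1/d by
    rw [← hd]; rw [div_eq_div_iff (by nlinarith) hdpos.ne']; ring]
  rw [one_div, div_eq_iff (by positivity : (d:ℝ)⁻¹ ≠ 0)]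
  field_simp

lemma ratio_tendsto :
    Filter.Tendsto
      (fun n : ℕ => d * ((1 - ((s*(1-d))/(s*(1+d)))^(n+1))
        / (1 + ((s*(1-d))/(s*(1+d)))^(n+1) - 2*(((s*(1+d))^(n+1))⁻¹))))
      Filter.atTop (nhds d) := by
  have hs0 : (0:ℝ) < s := by linarith
  have hP0 : (0:ℝ) < s*(1+d) := by nlinarith
  have hM0 : (0:ℝ) < s*(1-d) := by nlinarith
  have hP1 : (1:ℝ) < s*(1+d) := by nlinarith
  have hq0 : (0:ℝ) ≤ (s*(1-d))/(s*(1+d)) := by positivity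
  have hq1 : (s*(1-d))/(s*(1+d)) < 1 := by
    rw [div_lt_one hP0]; nlinarith
  have hq : Filter.Tendsto (fun n : ℕ => ((s*(1-d))/(s*(1+d)))^(n+1))
      Filter.atTop (nhds 0) := by
    have h := tendsto_pow_atTop_nhds_zero_of_lt_one hq0 hq1
    have := h.mul_const ((s*(1-d))/(s*(1+d)))
    simpa [pow_succ] using this
  have hp : Filter.Tendsto (fun n : ℕ => (((s*(1+d))^(n+1))⁻¹))
      Filter.atTop (nhds 0) := by
    have h0 : (0:ℝ) ≤ (s*(1+d))⁻¹ := by positivity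
    have h1 : (s*(1+d))⁻¹ < 1 := by
      rw [inv_lt_one_iff₀]; right; exact hP1
    have h := tendsto_pow_atTop_nhds_zero_of_lt_one h0 h1
    have h2 := (h.mul_const ((s*(1+d))⁻¹)).congr fun n => by rw [← pow_succ, inv_pow]
    simpa using h2
  have hnum : Filter.Tendsto (fun n : ℕ => (1:ℝ) - ((s*(1-d))/(s*(1+d)))^(n+1))
      Filter.atTop (nhds 1) := by
    simpa using tendsto_const_nhds.sub hq
  have hden : Filter.Tendsto
      (fun n : ℕ => 1 + ((s*(1-d))/(s*(1+d)))^(n+1) - 2*(((s*(1+d))^(n+1))⁻¹))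
      Filter.atTop (nhds 1) := by
    have h1 : Filter.Tendsto (fun n : ℕ => (1:ℝ) + ((s*(1-d))/(s*(1+d)))^(n+1))
        Filter.atTop (nhds 1) := by simpa using (tendsto_const_nhds (x := (1:ℝ))).add hq
    have := h1.sub (hp.const_mul 2)
    simpa using this
  have := (hnum.div hden one_ne_zero).const_mul d
  simpa using this
end ratio

theorem stmt_12 (s : ℕ) (hs : 2 ≤ s) :
    (∀ n : ℕ,
      ((Tset s n).card : ℝ) / (∑ k ∈ Finset.range (n + 1), ((Tset s k).card : ℝ))
        = Real.sqrt (((s : ℝ) - 1) / s)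
          * ((1 - (((s : ℝ) * (1 - Real.sqrt (1 - 1 / (s : ℝ))))
                    / ((s : ℝ) * (1 + Real.sqrt (1 - 1 / (s : ℝ))))) ^ (n + 1))
            / (1 + (((s : ℝ) * (1 - Real.sqrt (1 - 1 / (s : ℝ))))
                    / ((s : ℝ) * (1 + Real.sqrt (1 - 1 / (s : ℝ))))) ^ (n + 1)
                - 2 * (((s : ℝ) * (1 + Real.sqrt (1 - 1 / (s : ℝ)))) ^ (n + 1))⁻¹))) ∧
    Filter.Tendsto
      (fun n : ℕ =>
        ((Tset s n).card : ℝ) / (∑ k ∈ Finset.range (n + 1), ((Tset s k).card : ℝ)))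
      Filter.atTop (nhds (Real.sqrt (((s : ℝ) - 1) / s))) := by
  have hs0 : (0:ℝ) < s := by positivity
  have hsR : (2:ℝ) ≤ s := by exact_mod_cast hs
  set d : ℝ := Real.sqrt (1 - 1 / (s:ℝ)) with hdd
  have h1 : (0:ℝ) < 1 - 1/(s:ℝ) := by
    rw [sub_pos, div_lt_one hs0]; linarith
  have hdsq : d ^ 2 = 1 - 1/(s:ℝ) := Real.sq_sqrt h1.le
  have hdpos : 0 < d := Real.sqrt_pos.mpr h1
  have hd1 : d < 1 := by
    have h2 : (1:ℝ) - 1/(s:ℝ) < 1 := by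
      have : (0:ℝ) < 1/(s:ℝ) := by positivity
      linarith
    have := Real.sqrt_lt_sqrt h1.le h2
    rwa [Real.sqrt_one] at this
  have hsd2 : (s:ℝ) * d ^ 2 = (s:ℝ) - 1 := by
    rw [hdsq]; field_simp
  have hsqrt_eq : Real.sqrt (((s:ℝ) - 1) / s) = d := by
    rw [hdd]; congr 1; field_simp
  -- recurrence for cardinalities
  have hrecN : ∀ n, (Tset s (n+2)).card + s * (Tset s n).card
      = 2 * s * (Tset s (n+1)).card := by
    intro n
    have h := stepCount s n (by omega)
    rw [posCount s n] at h
    exact h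
  have harec : ∀ n, ((Tset s (n+2)).card : ℝ) + (s:ℝ) * (Tset s n).card
      = 2 * (s:ℝ) * (Tset s (n+1)).card := by
    intro n
    exact_mod_cast congrArg (Nat.cast : ℕ → ℝ) (hrecN n)
  have hcf : ∀ n, ((Tset s n).card : ℝ)
      = (((s:ℝ)*(1+d))^(n+1) - ((s:ℝ)*(1-d))^(n+1)) / (2*(s:ℝ)*d) :=
    closed_form hsR hdpos hd1 hsd2 (fun n => (Tset s n).card)
      (Tcard_zero s) (by exact_mod_cast Tcard_one s) harec
  have hsum : ∀ n, (∑ k ∈ Finset.range (n+1), ((Tset s k).card : ℝ))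
      = (((s:ℝ)*(1+d))^(n+1) + ((s:ℝ)*(1-d))^(n+1) - 2) / (2*((s:ℝ)-1)) :=
    sum_form hsR hdpos hd1 hsd2 (fun n => (Tset s n).card)
      (Tcard_zero s) (by exact_mod_cast Tcard_one s) harec
  have key : ∀ n : ℕ,
      ((Tset s n).card : ℝ) / (∑ k ∈ Finset.range (n + 1), ((Tset s k).card : ℝ))
        = d * ((1 - (((s:ℝ)*(1-d))/((s:ℝ)*(1+d)))^(n+1))
            / (1 + (((s:ℝ)*(1-d))/((s:ℝ)*(1+d)))^(n+1)
                - 2*((((s:ℝ)*(1+d))^(n+1))⁻¹))) := by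
    intro n
    rw [hcf n, hsum n]
    exact ratio_eq hsR hdpos hd1 hsd2 (n+1) (by omega)
  constructor
  · intro n
    rw [key n, hsqrt_eq]
  · rw [hsqrt_eq]
    exact (ratio_tendsto hsR hdpos hd1 hsd2).congr fun n => (key n).symm
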